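/- Under the assumptions E_{(x,a)∼ν}[|Δ|] ≤ δ_Δ, |1−ρ_k| ≤ δ_ρ a.s., ρ_k ≤ ρ_max a.s., E_{(x,a)∼ν}[E_r[(r̂−r)²]] ≤ e_r̂ a.s., and ν/μ̂_k ≤ M, with probability at least 1−δ the doubly robust estimator satisfies |V̂_DR − V| ≤ δ_ρ δ_Δ + 2 max{ (1+M)ln(2/δ)/n , sqrt( (Var_{x∼D}[r*(x,ν)] + 2δ_ρ δ_Δ + M ρ_max e_r̂)·ln(2/δ)/n ) }. -/

import Mathlib

open Finset
open scoped Classical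

set_option linter.unusedSectionVars false
set_option maxHeartbeats 1000000

section Aux

lemma exp_le_quad {y : ℝ} (hy : y ≤ 1) : Real.exp y ≤ 1 + y + y^2 := by
  rcases le_total y (-1) with h | h
  · have h1 : Real.exp y ≤ Real.exp (-1) := Real.exp_le_exp.2 h
    have h2 : Real.exp (-1) ≤ 3/4 := by
      rw [Real.exp_neg]
      rw [inv_le_comm₀ (Real.exp_pos 1) (by norm_num)]
      calc (3/4 : ℝ)⁻¹ = 4/3 := by norm_num
      _ ≤ 2.7182818283 := by norm_num
      _ ≤ Real.exp 1 := le_of_lt Real.exp_one_gt_d9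
    nlinarith [sq_nonneg (y + 1/2)]
  · have hb : |y| ≤ 1 := abs_le.2 ⟨h, hy⟩
    have := Real.exp_bound hb (n := 2) (by norm_num)
    have h2 : Real.exp y - (1 + y) ≤ |y|^2 * (3 / 4) := by
      have hsum : ∑ i ∈ range 2, y ^ i / (Nat.factorial i) = 1 + y := by
        simp [Finset.sum_range_succ, Nat.factorial]
      rw [hsum] at this
      calc Real.exp y - (1+y) ≤ |Real.exp y - (1+y)| := le_abs_self _
        _ ≤ |y|^2 * (Nat.succ 2 / ((Nat.factorial 2) * 2 : ℕ)) := by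
            convert this using 2; norm_num [Nat.factorial]
        _ = |y|^2 * (3/4) := by norm_num [Nat.factorial]
    have : |y|^2 = y^2 := sq_abs y
    nlinarith [sq_nonneg y]

variable {S : Type*} [Fintype S]

def consS (s0 : S) (H : ℕ → S) : ℕ → S := fun i => match i with
  | 0 => s0
  | j+1 => H j

def Hst (sd : S) {n : ℕ} (z : Fin n → S) (k : ℕ) : ℕ → S :=
  fun i => if h : i < n ∧ i < k then z ⟨i, h.1⟩ else sd

lemma Hst_zero (sd : S) {n : ℕ} (z : Fin n → S) : Hst sd z 0 = fun _ => sd := by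
  funext i; simp [Hst]

lemma Hst_cons (sd : S) {n : ℕ} (s0 : S) (z : Fin n → S) (k : ℕ) :
    Hst sd (Fin.cons s0 z) (k+1) = consS s0 (Hst sd z k) := by
  funext i
  cases i with
  | zero =>
      have h : (0:ℕ) < n+1 ∧ (0:ℕ) < k+1 := ⟨Nat.succ_pos n, Nat.succ_pos k⟩
      simp only [Hst, dif_pos h, consS]
      have h0 : (⟨0, h.1⟩ : Fin (n+1)) = 0 := by ext; simp
      rw [h0]
      exact Fin.cons_zero _ _
  | succ j =>
      simp only [Hst, consS, Nat.succ_lt_succ_iff]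
      by_cases h : j < n ∧ j < k
      · rw [dif_pos h, dif_pos h]
        have : (⟨j+1, Nat.succ_lt_succ h.1⟩ : Fin (n+1)) = Fin.succ ⟨j, h.1⟩ := rfl
        rw [this, Fin.cons_succ]
      · rw [dif_neg h, dif_neg h]

lemma sum_pi_succ {M : Type*} [AddCommMonoid M] (n : ℕ) (F : (Fin (n+1) → S) → M) :
    ∑ z : Fin (n+1) → S, F z = ∑ s0 : S, ∑ z : Fin n → S, F (Fin.cons s0 z) := by
  rw [← (Fin.consEquiv (fun _ : Fin (n+1) => S)).sum_comp F, Fintype.sum_prod_type]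
  rfl

def PathPos (sd : S) {n : ℕ} (p : ℕ → (ℕ → S) → S → ℝ) (z : Fin n → S) : Prop :=
  ∀ k : Fin n, p k.1 (Hst sd z k.1) (z k) ≠ 0

lemma exists_pathPos (sd : S) : ∀ (n : ℕ) (p : ℕ → (ℕ → S) → S → ℝ),
    (∀ k h, ∑ s, p k h s = 1) → ∃ z : Fin n → S, PathPos sd p z := by
  intro n
  induction n with
  | zero => exact fun p _ => ⟨fun i => i.elim0, fun k => k.elim0⟩
  | succ n ih =>
      intro p hp1
      have h1 : ∑ s, p 0 (fun _ => sd) s ≠ 0 := by rw [hp1]; exact one_ne_zero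
      obtain ⟨s0, -, hs0⟩ := Finset.exists_ne_zero_of_sum_ne_zero h1
      obtain ⟨z', hz'⟩ := ih (fun k h => p (k+1) (consS s0 h)) (fun k h => hp1 (k+1) _)
      refine ⟨Fin.cons s0 z', fun k => ?_⟩
      induction k using Fin.cases with
      | zero => simpa only [Fin.val_zero, Hst_zero, Fin.cons_zero] using hs0
      | succ j =>
          simpa only [Fin.val_succ, Hst_cons, Fin.cons_succ] using hz' j

lemma sum_prod_one (sd : S) : ∀ (n : ℕ) (p : ℕ → (ℕ → S) → S → ℝ),
    (∀ k h, ∑ s, p k h s = 1) →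
    ∑ z : Fin n → S, ∏ k : Fin n, p k.1 (Hst sd z k.1) (z k) = 1 := by
  intro n
  induction n with
  | zero =>
      intro p _
      rw [Fintype.sum_subsingleton _ (fun i : Fin 0 => i.elim0)]
      simp
  | succ n ih =>
      intro p hp1
      rw [sum_pi_succ]
      have key : ∀ s0 : S, ∑ z : Fin n → S,
          ∏ k : Fin (n+1), p k.1 (Hst sd (Fin.cons s0 z : Fin (n+1) → S) k.1) ((Fin.cons s0 z : Fin (n+1) → S) k) =
          p 0 (fun _ => sd) s0 := by
        intro s0
        have hz : ∀ z : Fin n → S,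
            (∏ k : Fin (n+1), p k.1 (Hst sd (Fin.cons s0 z : Fin (n+1) → S) k.1) ((Fin.cons s0 z : Fin (n+1) → S) k)) =
            p 0 (fun _ => sd) s0 *
              ∏ k : Fin n, p (k.1+1) (consS s0 (Hst sd z k.1)) (z k) := by
          intro z
          rw [Fin.prod_univ_succ]
          simp only [Fin.val_zero, Hst_zero, Fin.cons_zero, Fin.val_succ, Hst_cons,
            Fin.cons_succ]
        calc ∑ z : Fin n → S, ∏ k : Fin (n+1), p k.1 (Hst sd (Fin.cons s0 z : Fin (n+1) → S) k.1)
              ((Fin.cons s0 z : Fin (n+1) → S) k)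
            = ∑ z : Fin n → S, p 0 (fun _ => sd) s0 *
              ∏ k : Fin n, p (k.1+1) (consS s0 (Hst sd z k.1)) (z k) :=
              Finset.sum_congr rfl (fun z _ => hz z)
          _ = p 0 (fun _ => sd) s0 * ∑ z : Fin n → S,
              ∏ k : Fin n, p (k.1+1) (consS s0 (Hst sd z k.1)) (z k) := by
              rw [Finset.mul_sum]
          _ = p 0 (fun _ => sd) s0 := by
              rw [ih (fun k h => p (k+1) (consS s0 h)) (fun k h => hp1 (k+1) _), mul_one]
      rw [Finset.sum_congr rfl (fun s0 _ => key s0), hp1]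

lemma peel_le (sd : S) : ∀ (n : ℕ) (B : ℝ) (p g : ℕ → (ℕ → S) → S → ℝ),
    0 ≤ B →
    (∀ k h s, 0 ≤ p k h s) → (∀ k h, ∑ s, p k h s = 1) →
    (∀ k h s, 0 ≤ g k h s) →
    (∀ (k : ℕ) (h : ℕ → S), (∃ z : Fin n → S, PathPos sd p z ∧ h = Hst sd z k) →
      ∑ s, p k h s * g k h s ≤ B) →
    ∑ z : Fin n → S, ∏ k : Fin n,
      p k.1 (Hst sd z k.1) (z k) * g k.1 (Hst sd z k.1) (z k) ≤ B ^ n := by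
  intro n
  induction n with
  | zero =>
      intro B p g hB0 _ _ _ _
      rw [Fintype.sum_subsingleton _ (fun i : Fin 0 => i.elim0)]
      simp
  | succ n ih =>
      intro B p g hB0 hp0 hp1 hg0 hB
      rw [sum_pi_succ]
      set h₀ : ℕ → S := fun _ => sd with hh₀
      have key : ∀ s0 : S, ∑ z : Fin n → S,
          (∏ k : Fin (n+1), p k.1 (Hst sd (Fin.cons s0 z : Fin (n+1) → S) k.1)
            ((Fin.cons s0 z : Fin (n+1) → S) k) *
            g k.1 (Hst sd (Fin.cons s0 z : Fin (n+1) → S) k.1)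
            ((Fin.cons s0 z : Fin (n+1) → S) k)) ≤
          (p 0 h₀ s0 * g 0 h₀ s0) * B ^ n := by
        intro s0
        have hz : ∀ z : Fin n → S,
            (∏ k : Fin (n+1), p k.1 (Hst sd (Fin.cons s0 z : Fin (n+1) → S) k.1)
              ((Fin.cons s0 z : Fin (n+1) → S) k) *
              g k.1 (Hst sd (Fin.cons s0 z : Fin (n+1) → S) k.1)
              ((Fin.cons s0 z : Fin (n+1) → S) k)) =
            (p 0 h₀ s0 * g 0 h₀ s0) *
              ∏ k : Fin n, p (k.1+1) (consS s0 (Hst sd z k.1)) (z k) *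
                g (k.1+1) (consS s0 (Hst sd z k.1)) (z k) := by
          intro z
          rw [Fin.prod_univ_succ]
          simp only [Fin.val_zero, Hst_zero, Fin.cons_zero, Fin.val_succ, Hst_cons,
            Fin.cons_succ, hh₀]
        rw [Finset.sum_congr rfl (fun z _ => hz z), ← Finset.mul_sum]
        by_cases hs0 : p 0 h₀ s0 = 0
        · rw [hs0, zero_mul, zero_mul, zero_mul]
        · have hc0 : 0 ≤ p 0 h₀ s0 * g 0 h₀ s0 := mul_nonneg (hp0 _ _ _) (hg0 _ _ _)
          refine mul_le_mul_of_nonneg_left ?_ hc0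
          refine ih B (fun k h => p (k+1) (consS s0 h)) (fun k h => g (k+1) (consS s0 h))
            hB0 (fun k h s => hp0 _ _ _) (fun k h => hp1 _ _) (fun k h s => hg0 _ _ _) ?_
          rintro k h ⟨z', hzp, rfl⟩
          refine hB (k+1) (consS s0 (Hst sd z' k)) ⟨Fin.cons s0 z', ?_, ?_⟩
          · intro j
            induction j using Fin.cases with
            | zero => simpa only [Fin.val_zero, Hst_zero, Fin.cons_zero] using hs0
            | succ i => simpa only [Fin.val_succ, Hst_cons, Fin.cons_succ] using hzp i
          · rw [Hst_cons]
      calc ∑ s0 : S, ∑ z : Fin n → S,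
            (∏ k : Fin (n+1), p k.1 (Hst sd (Fin.cons s0 z : Fin (n+1) → S) k.1)
              ((Fin.cons s0 z : Fin (n+1) → S) k) *
              g k.1 (Hst sd (Fin.cons s0 z : Fin (n+1) → S) k.1)
              ((Fin.cons s0 z : Fin (n+1) → S) k))
          ≤ ∑ s0 : S, (p 0 h₀ s0 * g 0 h₀ s0) * B ^ n :=
            Finset.sum_le_sum (fun s0 _ => key s0)
        _ = (∑ s0 : S, p 0 h₀ s0 * g 0 h₀ s0) * B ^ n := by rw [Finset.sum_mul]
        _ ≤ B * B ^ n := by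
            refine mul_le_mul_of_nonneg_right ?_ (pow_nonneg hB0 n)
            obtain ⟨z, hz⟩ := exists_pathPos sd (n+1) p hp1
            exact hB 0 h₀ ⟨z, hz, (Hst_zero sd z).symm⟩
        _ = B ^ (n+1) := (pow_succ' B n).symm

end Aux
section Aux2



lemma step_exp {S : Type*} [Fintype S] (q f : S → ℝ) (bd s2 lam R : ℝ)
    (hq0 : ∀ s, 0 ≤ q s) (hq1 : ∑ s, q s = 1)
    (hmean : ∑ s, q s * f s ≤ bd) (hvar : ∑ s, q s * f s ^ 2 ≤ s2)
    (hrange : ∀ s, f s ≤ R) (hlam : 0 < lam) (hlamR : lam * R ≤ 1) :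
    ∑ s, q s * Real.exp (lam * f s) ≤ Real.exp (lam * bd + lam ^ 2 * s2) := by
  have h1 : ∑ s, q s * Real.exp (lam * f s) ≤ 1 + lam * bd + lam ^ 2 * s2 := by
    calc ∑ s, q s * Real.exp (lam * f s)
        ≤ ∑ s, q s * (1 + lam * f s + (lam * f s) ^ 2) := by
          refine Finset.sum_le_sum (fun s _ => mul_le_mul_of_nonneg_left ?_ (hq0 s))
          exact exp_le_quad (le_trans (mul_le_mul_of_nonneg_left (hrange s) hlam.le) hlamR)
      _ = ∑ s, (q s + lam * (q s * f s) + lam ^ 2 * (q s * f s ^ 2)) := by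
          refine Finset.sum_congr rfl (fun s _ => ?_); ring
      _ = 1 + lam * (∑ s, q s * f s) + lam ^ 2 * (∑ s, q s * f s ^ 2) := by
          rw [Finset.sum_add_distrib, Finset.sum_add_distrib, ← Finset.mul_sum,
            ← Finset.mul_sum, hq1]
      _ ≤ 1 + lam * bd + lam ^ 2 * s2 := by
          have := mul_le_mul_of_nonneg_left hmean hlam.le
          have := mul_le_mul_of_nonneg_left hvar (sq_nonneg lam)
          linarith
  have h2 := Real.add_one_le_exp (lam * bd + lam ^ 2 * s2)
  linarith

lemma sum3 {X A R : Type*} [Fintype X] [Fintype A] [Fintype R] (F : X × A × R → ℝ) :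
    ∑ s, F s = ∑ x, ∑ a, ∑ r, F (x,a,r) := by
  rw [Fintype.sum_prod_type]
  exact Finset.sum_congr rfl fun x _ => by rw [Fintype.sum_prod_type]

lemma core {X A R : Type*} [Fintype X] [Fintype A] [Fintype R]
    (D : X → ℝ) (nu : X → A → ℝ) (Dr : X → A → R → ℝ) (rval : R → ℝ)
    (rhat : X → A → ℝ) (m mh : X → A → ℝ)
    (M δΔ δρ ρmax e V : ℝ)
    (rstar : X → A → ℝ) (Δ : X → A → ℝ) (rnux : X → ℝ)
    (hD0 : ∀ x, 0 ≤ D x) (hD1 : ∑ x, D x = 1)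
    (hnu0 : ∀ x a, 0 ≤ nu x a) (hnu1 : ∀ x, ∑ a, nu x a = 1)
    (hm0 : ∀ x a, 0 ≤ m x a) (hm1 : ∀ x, ∑ a, m x a = 1)
    (hDr0 : ∀ x a r, 0 ≤ Dr x a r) (hDr1 : ∀ x a, ∑ r, Dr x a r = 1)
    (hrval0 : ∀ r, 0 ≤ rval r) (hrval1 : ∀ r, rval r ≤ 1)
    (hrhat0 : ∀ x a, 0 ≤ rhat x a) (hrhat1 : ∀ x a, rhat x a ≤ 1)
    (hmh : ∀ x a, 0 < mh x a)
    (hrstar : ∀ x a, rstar x a = ∑ r, Dr x a r * rval r)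
    (hΔ : ∀ x a, Δ x a = rhat x a - rstar x a)
    (hrnux : ∀ x, rnux x = ∑ a, nu x a * rstar x a)
    (hV : V = ∑ x, ∑ a, D x * (nu x a * rstar x a))
    (hδΔ : ∑ x, ∑ a, D x * (nu x a * |Δ x a|) ≤ δΔ)
    (he : ∑ x, ∑ a, D x * (nu x a * ∑ r, Dr x a r * (rhat x a - rval r)^2) ≤ e)
    (hbδρ : ∀ x a, |1 - m x a / mh x a| ≤ δρ)
    (hbρ : ∀ x a, m x a / mh x a ≤ ρmax)
    (hbM : ∀ x a, nu x a / mh x a ≤ M)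
    (hδρ0 : 0 ≤ δρ) (hρmax0 : 0 ≤ ρmax) (hM0 : 0 ≤ M)
    (f : X × A × R → ℝ)
    (hf : ∀ x a r, f (x,a,r) = (∑ a', nu x a' * rhat x a')
        + (nu x a / mh x a) * (rval r - rhat x a)) :
    |∑ s : X × A × R, (D s.1 * (m s.1 s.2.1 * Dr s.1 s.2.1 s.2.2)) * (f s - V)| ≤ δρ * δΔ
    ∧ ∑ s : X × A × R, (D s.1 * (m s.1 s.2.1 * Dr s.1 s.2.1 s.2.2)) * (f s - V)^2
        ≤ ((∑ x, D x * (rnux x)^2) - (∑ x, D x * rnux x)^2) + 2*(δρ*δΔ) + M*(ρmax*e)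
    ∧ ∀ s, |f s - V| ≤ 1 + M := by
  obtain ⟨g, hgd⟩ : ∃ g : X → ℝ, ∀ x, g x = ∑ a', nu x a' * rhat x a' := ⟨_, fun _ => rfl⟩
  obtain ⟨w, hwd⟩ : ∃ w : X → A → ℝ, ∀ x a, w x a = nu x a / mh x a := ⟨_, fun _ _ => rfl⟩
  obtain ⟨ρ, hρd⟩ : ∃ ρ : X → A → ℝ, ∀ x a, ρ x a = m x a / mh x a := ⟨_, fun _ _ => rfl⟩
  obtain ⟨E2, hE2d⟩ : ∃ E2 : X → A → ℝ, ∀ x a,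
    E2 x a = ∑ r, Dr x a r * (rhat x a - rval r)^2 := ⟨_, fun _ _ => rfl⟩
  obtain ⟨Dn, hDnd⟩ : ∃ Dn : X → ℝ, ∀ x, Dn x = ∑ a, nu x a * Δ x a := ⟨_, fun _ => rfl⟩
  have hbδρ' : ∀ x a, |1 - ρ x a| ≤ δρ := fun x a => by rw [hρd]; exact hbδρ x a
  have hbρ' : ∀ x a, ρ x a ≤ ρmax := fun x a => by rw [hρd]; exact hbρ x a
  have hbM' : ∀ x a, w x a ≤ M := fun x a => by rw [hwd]; exact hbM x a
  have he' : ∑ x, ∑ a, D x * (nu x a * E2 x a) ≤ e := by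
    calc ∑ x, ∑ a, D x * (nu x a * E2 x a)
        = ∑ x, ∑ a, D x * (nu x a * ∑ r, Dr x a r * (rhat x a - rval r)^2) :=
          Finset.sum_congr rfl fun x _ => Finset.sum_congr rfl fun a _ => by rw [hE2d]
      _ ≤ e := he
  -- basic bounds
  have hrstar0 : ∀ x a, 0 ≤ rstar x a := fun x a => by
    rw [hrstar]; exact Finset.sum_nonneg fun r _ => mul_nonneg (hDr0 x a r) (hrval0 r)
  have hrstar1 : ∀ x a, rstar x a ≤ 1 := fun x a => by
    rw [hrstar]
    calc ∑ r, Dr x a r * rval r ≤ ∑ r, Dr x a r * 1 :=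
          Finset.sum_le_sum fun r _ => mul_le_mul_of_nonneg_left (hrval1 r) (hDr0 x a r)
      _ = 1 := by
          rw [Finset.sum_congr rfl fun r _ => (mul_one (Dr x a r))]; exact hDr1 x a
  have hg0 : ∀ x, 0 ≤ g x := fun x => by
    rw [hgd]; exact Finset.sum_nonneg fun a _ => mul_nonneg (hnu0 x a) (hrhat0 x a)
  have hg1 : ∀ x, g x ≤ 1 := fun x => by
    rw [hgd]
    calc ∑ a, nu x a * rhat x a ≤ ∑ a, nu x a * 1 :=
          Finset.sum_le_sum fun a _ => mul_le_mul_of_nonneg_left (hrhat1 x a) (hnu0 x a)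
      _ = 1 := by
          rw [Finset.sum_congr rfl fun a _ => (mul_one (nu x a))]; exact hnu1 x
  have hV0 : 0 ≤ V := by
    rw [hV]
    exact Finset.sum_nonneg fun x _ => Finset.sum_nonneg fun a _ =>
      mul_nonneg (hD0 x) (mul_nonneg (hnu0 x a) (hrstar0 x a))
  have hV1 : V ≤ 1 := by
    rw [hV]
    calc ∑ x, ∑ a, D x * (nu x a * rstar x a) ≤ ∑ x, ∑ a, D x * (nu x a * 1) := by
          refine Finset.sum_le_sum fun x _ => Finset.sum_le_sum fun a _ => ?_
          exact mul_le_mul_of_nonneg_left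
            (mul_le_mul_of_nonneg_left (hrstar1 x a) (hnu0 x a)) (hD0 x)
      _ = 1 := by
          rw [Finset.sum_congr rfl fun (x:X) _ => show (∑ a, D x * (nu x a * 1)) = D x from by
            rw [← Finset.mul_sum, Finset.sum_congr rfl fun a _ => (mul_one (nu x a)), hnu1 x,
              mul_one]]
          exact hD1
  have hw0 : ∀ x a, 0 ≤ w x a := fun x a => by
    rw [hwd]; exact div_nonneg (hnu0 x a) (hmh x a).le
  have hρ0 : ∀ x a, 0 ≤ ρ x a := fun x a => by
    rw [hρd]; exact div_nonneg (hm0 x a) (hmh x a).le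
  have hE20 : ∀ x a, 0 ≤ E2 x a := fun x a => by
    rw [hE2d]; exact Finset.sum_nonneg fun r _ => mul_nonneg (hDr0 x a r) (sq_nonneg _)
  have habs_a : ∀ x, |g x - V| ≤ 1 :=
    fun x => abs_le.2 ⟨by linarith [hg0 x, hV1], by linarith [hg1 x, hV0]⟩
  have hDV : ∑ x, D x * rnux x = V := by
    rw [hV]
    refine Finset.sum_congr rfl fun x _ => ?_
    rw [hrnux, Finset.mul_sum]
  -- generic weighted absolute bound
  have habsbound : ∀ (c : X → ℝ), (∀ x, |c x| ≤ 1) →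
      ∑ x, ∑ a, c x * (D x * (nu x a * (Δ x a * (1 - ρ x a)))) ≤ δρ * δΔ := by
    intro c hc
    calc ∑ x, ∑ a, c x * (D x * (nu x a * (Δ x a * (1 - ρ x a))))
        ≤ ∑ x, ∑ a, D x * (nu x a * (|Δ x a| * δρ)) := by
          refine Finset.sum_le_sum fun x _ => Finset.sum_le_sum fun a _ => ?_
          have h1 : |Δ x a| * |1 - ρ x a| ≤ |Δ x a| * δρ :=
            mul_le_mul_of_nonneg_left (hbδρ' x a) (abs_nonneg _)
          have h2 : nu x a * (|Δ x a| * |1 - ρ x a|) ≤ nu x a * (|Δ x a| * δρ) :=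
            mul_le_mul_of_nonneg_left h1 (hnu0 x a)
          have h3 : D x * (nu x a * (|Δ x a| * |1 - ρ x a|)) ≤ D x * (nu x a * (|Δ x a| * δρ)) :=
            mul_le_mul_of_nonneg_left h2 (hD0 x)
          calc c x * (D x * (nu x a * (Δ x a * (1 - ρ x a))))
              ≤ |c x * (D x * (nu x a * (Δ x a * (1 - ρ x a))))| := le_abs_self _
            _ = |c x| * (D x * (nu x a * (|Δ x a| * |1 - ρ x a|))) := by
                rw [abs_mul, abs_mul, abs_mul, abs_mul, abs_of_nonneg (hD0 x),
                  abs_of_nonneg (hnu0 x a)]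
            _ ≤ 1 * (D x * (nu x a * (|Δ x a| * δρ))) :=
                mul_le_mul (hc x) h3 (mul_nonneg (hD0 x) (mul_nonneg (hnu0 x a) (mul_nonneg (abs_nonneg _) (abs_nonneg _)))) zero_le_one
            _ = D x * (nu x a * (|Δ x a| * δρ)) := one_mul _
      _ = δρ * ∑ x, ∑ a, D x * (nu x a * |Δ x a|) := by
          rw [Finset.mul_sum]
          refine Finset.sum_congr rfl fun x _ => ?_
          rw [Finset.mul_sum]
          exact Finset.sum_congr rfl fun a _ => by ring
      _ ≤ δρ * δΔ := mul_le_mul_of_nonneg_left hδΔ hδρ0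
  -- conditional mean identity
  have e1 : ∀ x a, ∑ r, Dr x a r * rval r = rstar x a := fun x a => (hrstar x a).symm
  have hr1 : ∀ x a, ∑ r, (D x * (m x a * Dr x a r)) * (f (x,a,r) - V)
      = D x * (m x a * ((g x - V) - w x a * Δ x a)) := by
    intro x a
    have step : ∀ r, (D x * (m x a * Dr x a r)) * (f (x,a,r) - V)
        = Dr x a r * (D x * m x a * (g x - V - w x a * rhat x a))
          + (Dr x a r * rval r) * (D x * m x a * w x a) := by
      intro r; rw [hf, hwd, hgd]; ring
    rw [Finset.sum_congr rfl fun r _ => step r, Finset.sum_add_distrib,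
      ← Finset.sum_mul, ← Finset.sum_mul, hDr1, e1, hΔ]
    ring
  have ha1 : ∀ x, ∑ a, D x * (m x a * ((g x - V) - w x a * Δ x a))
      = D x * g x - D x * V - ∑ a, D x * (nu x a * (ρ x a * Δ x a)) := by
    intro x
    have step : ∀ a, D x * (m x a * ((g x - V) - w x a * Δ x a))
        = m x a * (D x * (g x - V)) - D x * (nu x a * (ρ x a * Δ x a)) := by
      intro a; rw [hwd, hρd]; ring
    rw [Finset.sum_congr rfl fun a _ => step a, Finset.sum_sub_distrib,
      ← Finset.sum_mul, hm1]
    ring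
  have hmean : ∑ s : X × A × R, (D s.1 * (m s.1 s.2.1 * Dr s.1 s.2.1 s.2.2)) * (f s - V)
      = ∑ x, ∑ a, D x * (nu x a * (Δ x a * (1 - ρ x a))) := by
    rw [sum3]
    calc ∑ x, ∑ a, ∑ r, (D x * (m x a * Dr x a r)) * (f (x,a,r) - V)
        = ∑ x, (D x * g x - D x * V - ∑ a, D x * (nu x a * (ρ x a * Δ x a))) := by
          refine Finset.sum_congr rfl fun x _ => ?_
          rw [Finset.sum_congr rfl fun a _ => hr1 x a, ha1 x]
      _ = (∑ x, D x * g x) - (∑ x, D x * V) - ∑ x, ∑ a, D x * (nu x a * (ρ x a * Δ x a)) := by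
          rw [Finset.sum_sub_distrib, Finset.sum_sub_distrib]
      _ = (∑ x, ∑ a, D x * (nu x a * rhat x a)) - V
            - ∑ x, ∑ a, D x * (nu x a * (ρ x a * Δ x a)) := by
          rw [← Finset.sum_mul, hD1, one_mul]
          congr 1
          congr 1
          refine Finset.sum_congr rfl fun x _ => ?_
          rw [hgd, Finset.mul_sum]
      _ = ∑ x, ∑ a, D x * (nu x a * (Δ x a * (1 - ρ x a))) := by
          rw [hV, ← Finset.sum_sub_distrib, ← Finset.sum_sub_distrib]
          refine Finset.sum_congr rfl fun x _ => ?_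
          rw [← Finset.sum_sub_distrib, ← Finset.sum_sub_distrib]
          refine Finset.sum_congr rfl fun a _ => ?_
          have hr : rhat x a = Δ x a + rstar x a := by rw [hΔ]; ring
          rw [hr]; ring
  have c1 : |∑ s : X × A × R, (D s.1 * (m s.1 s.2.1 * Dr s.1 s.2.1 s.2.2)) * (f s - V)|
      ≤ δρ * δΔ := by
    rw [hmean, abs_le]
    constructor
    · have := habsbound (fun _ => -1) (fun x => by simp)
      have heq : ∑ x, ∑ a, (fun _ : X => (-1:ℝ)) x * (D x * (nu x a * (Δ x a * (1 - ρ x a))))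
          = -∑ x, ∑ a, D x * (nu x a * (Δ x a * (1 - ρ x a))) := by
        rw [← Finset.sum_neg_distrib]
        refine Finset.sum_congr rfl fun x _ => ?_
        rw [← Finset.sum_neg_distrib]
        exact Finset.sum_congr rfl fun a _ => by ring
      rw [heq] at this
      linarith
    · have := habsbound (fun _ => 1) (fun x => by simp)
      have heq : ∑ x, ∑ a, (fun _ : X => (1:ℝ)) x * (D x * (nu x a * (Δ x a * (1 - ρ x a))))
          = ∑ x, ∑ a, D x * (nu x a * (Δ x a * (1 - ρ x a))) := by
        refine Finset.sum_congr rfl fun x _ => Finset.sum_congr rfl fun a _ => one_mul _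
      rw [heq] at this
      exact this
  -- second moment
  have hr2 : ∀ x a, ∑ r, (D x * (m x a * Dr x a r)) * (f (x,a,r) - V)^2
      = D x * (m x a * ((g x - V)^2 - 2*(g x - V)*(w x a * Δ x a) + w x a^2 * E2 x a)) := by
    intro x a
    have step : ∀ r, (D x * (m x a * Dr x a r)) * (f (x,a,r) - V)^2
        = Dr x a r * (D x * m x a * ((g x - V)^2 - 2*(g x - V)*(w x a * rhat x a)))
          + (Dr x a r * rval r) * (D x * m x a * (2*(g x - V)* w x a))
          + (Dr x a r * (rhat x a - rval r)^2) * (D x * m x a * w x a^2) := by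
      intro r; rw [hf, hwd, hgd]; ring
    rw [Finset.sum_congr rfl fun r _ => step r, Finset.sum_add_distrib, Finset.sum_add_distrib,
      ← Finset.sum_mul, ← Finset.sum_mul, ← Finset.sum_mul, hDr1, e1, ← hE2d, hΔ]
    ring
  have ha2 : ∀ x, ∑ a, D x * (m x a * ((g x - V)^2 - 2*(g x - V)*(w x a * Δ x a)
        + w x a^2 * E2 x a))
      = D x * (g x - V)^2 - 2*(g x - V)*(∑ a, D x * (nu x a * (ρ x a * Δ x a)))
        + ∑ a, D x * (nu x a * (ρ x a * (w x a * E2 x a))) := by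
    intro x
    have step : ∀ a, D x * (m x a * ((g x - V)^2 - 2*(g x - V)*(w x a * Δ x a)
          + w x a^2 * E2 x a))
        = m x a * (D x * (g x - V)^2) - 2*(g x - V)*(D x * (nu x a * (ρ x a * Δ x a)))
          + D x * (nu x a * (ρ x a * (w x a * E2 x a))) := by
      intro a; rw [hwd, hρd]; ring
    rw [Finset.sum_congr rfl fun a _ => step a, Finset.sum_add_distrib,
      Finset.sum_sub_distrib, ← Finset.sum_mul, hm1, ← Finset.mul_sum]
    ring
  have hsq : ∑ s : X × A × R, (D s.1 * (m s.1 s.2.1 * Dr s.1 s.2.1 s.2.2)) * (f s - V)^2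
      = (∑ x, D x * (g x - V)^2)
        - (∑ x, 2*(g x - V)*(∑ a, D x * (nu x a * (ρ x a * Δ x a))))
        + ∑ x, ∑ a, D x * (nu x a * (ρ x a * (w x a * E2 x a))) := by
    rw [sum3]
    rw [Finset.sum_congr rfl fun x _ => by
      rw [Finset.sum_congr rfl fun a _ => hr2 x a, ha2 x]]
    rw [Finset.sum_add_distrib, Finset.sum_sub_distrib]
  have P3 : ∑ x, ∑ a, D x * (nu x a * (ρ x a * (w x a * E2 x a))) ≤ M*(ρmax*e) := by
    calc ∑ x, ∑ a, D x * (nu x a * (ρ x a * (w x a * E2 x a)))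
        ≤ ∑ x, ∑ a, (ρmax*M) * (D x * (nu x a * E2 x a)) := by
          refine Finset.sum_le_sum fun x _ => Finset.sum_le_sum fun a _ => ?_
          have h1 : ρ x a * w x a ≤ ρmax * M :=
            mul_le_mul (hbρ' x a) (hbM' x a) (hw0 x a) hρmax0
          have h2 : ρ x a * (w x a * E2 x a) ≤ (ρmax*M) * E2 x a := by
            calc ρ x a * (w x a * E2 x a) = (ρ x a * w x a) * E2 x a := by ring
              _ ≤ (ρmax*M) * E2 x a := mul_le_mul_of_nonneg_right h1 (hE20 x a)
          calc D x * (nu x a * (ρ x a * (w x a * E2 x a)))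
              ≤ D x * (nu x a * ((ρmax*M) * E2 x a)) :=
                mul_le_mul_of_nonneg_left (mul_le_mul_of_nonneg_left h2 (hnu0 x a)) (hD0 x)
            _ = (ρmax*M) * (D x * (nu x a * E2 x a)) := by ring
      _ = (ρmax*M) * ∑ x, ∑ a, D x * (nu x a * E2 x a) := by
          rw [Finset.mul_sum]
          exact Finset.sum_congr rfl fun x _ => by rw [Finset.mul_sum]
      _ ≤ (ρmax*M) * e := mul_le_mul_of_nonneg_left he' (mul_nonneg hρmax0 hM0)
      _ = M*(ρmax*e) := by ring
  have identB : ∑ x, 2*(g x - V)*(∑ a, D x * (nu x a * (ρ x a * Δ x a)))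
      = (∑ x, 2*(g x - V)*(∑ a, D x * (nu x a * Δ x a)))
        - ∑ x, ∑ a, 2*((g x - V) * (D x * (nu x a * (Δ x a * (1 - ρ x a))))) := by
    rw [← Finset.sum_sub_distrib]
    refine Finset.sum_congr rfl fun x _ => ?_
    rw [Finset.mul_sum, Finset.mul_sum, ← Finset.sum_sub_distrib]
    exact Finset.sum_congr rfl fun a _ => by ring
  have P2 : ∑ x, ∑ a, 2*((g x - V) * (D x * (nu x a * (Δ x a * (1 - ρ x a))))) ≤ 2*(δρ*δΔ) := by
    have h := habsbound (fun x => g x - V) habs_a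
    have heq : ∑ x, ∑ a, 2*((g x - V) * (D x * (nu x a * (Δ x a * (1 - ρ x a)))))
        = 2 * ∑ x, ∑ a, (g x - V) * (D x * (nu x a * (Δ x a * (1 - ρ x a)))) := by
      rw [Finset.mul_sum]
      exact Finset.sum_congr rfl fun x _ => by rw [Finset.mul_sum]
    rw [heq]; linarith
  have key1 : ∀ x, (g x - V) - Dn x = rnux x - V := by
    intro x
    have : g x - Dn x = rnux x := by
      rw [hgd, hDnd, hrnux, ← Finset.sum_sub_distrib]
      exact Finset.sum_congr rfl fun a _ => by rw [hΔ]; ring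
    linarith
  have hDnD : ∀ x, ∑ a, D x * (nu x a * Δ x a) = D x * Dn x := by
    intro x
    rw [hDnd, Finset.mul_sum]
  have P1 : (∑ x, D x * (g x - V)^2) - (∑ x, 2*(g x - V)*(∑ a, D x * (nu x a * Δ x a)))
      ≤ (∑ x, D x * (rnux x)^2) - (∑ x, D x * rnux x)^2 := by
    have hle : ∀ x, D x * (g x - V)^2 - 2*(g x - V)*(∑ a, D x * (nu x a * Δ x a))
        ≤ D x * (rnux x - V)^2 := by
      intro x
      rw [hDnD x, ← key1 x]
      nlinarith [mul_nonneg (hD0 x) (sq_nonneg (Dn x))]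
    calc (∑ x, D x * (g x - V)^2) - (∑ x, 2*(g x - V)*(∑ a, D x * (nu x a * Δ x a)))
        = ∑ x, (D x * (g x - V)^2 - 2*(g x - V)*(∑ a, D x * (nu x a * Δ x a))) := by
          rw [Finset.sum_sub_distrib]
      _ ≤ ∑ x, D x * (rnux x - V)^2 := Finset.sum_le_sum fun x _ => hle x
      _ = (∑ x, D x * (rnux x)^2) - (∑ x, D x * rnux x)^2 := by
          have expand : ∀ x, D x * (rnux x - V)^2
              = D x * (rnux x)^2 - (2*V)*(D x * rnux x) + (V^2)*(D x) := by intro x; ring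
          rw [Finset.sum_congr rfl fun x _ => expand x, Finset.sum_add_distrib,
            Finset.sum_sub_distrib, ← Finset.mul_sum, ← Finset.mul_sum, hDV, hD1]
          ring
  have c2 : ∑ s : X × A × R, (D s.1 * (m s.1 s.2.1 * Dr s.1 s.2.1 s.2.2)) * (f s - V)^2
      ≤ ((∑ x, D x * (rnux x)^2) - (∑ x, D x * rnux x)^2) + 2*(δρ*δΔ) + M*(ρmax*e) := by
    rw [hsq, identB]
    linarith
  have c3 : ∀ s : X × A × R, |f s - V| ≤ 1 + M := by
    rintro ⟨x, a, r⟩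
    rw [hf, ← hgd x, ← hwd x a]
    have h1 : w x a * (rval r - rhat x a) ≤ M := by
      calc w x a * (rval r - rhat x a) ≤ w x a * 1 :=
            mul_le_mul_of_nonneg_left (by linarith [hrval1 r, hrhat0 x a]) (hw0 x a)
        _ = w x a := mul_one _
        _ ≤ M := hbM' x a
    have h2 : -M ≤ w x a * (rval r - rhat x a) := by
      have h3 : w x a * (-1) ≤ w x a * (rval r - rhat x a) :=
        mul_le_mul_of_nonneg_left (by linarith [hrval0 r, hrhat1 x a]) (hw0 x a)
      have h4 := hbM' x a
      linarith
    rw [abs_le]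
    exact ⟨by linarith [hg0 x, hV1], by linarith [hg1 x, hV0]⟩
  exact ⟨c1, c2, c3⟩

end Aux2
theorem stmt8 {X A R : Type*} [Fintype X] [Fintype A] [Fintype R]
    (n : ℕ) (hn : 0 < n)
    (D : X → ℝ) (nu : X → A → ℝ) (Dr : X → A → R → ℝ) (rval : R → ℝ)
    (rhat : X → A → ℝ)
    (mu : (k : Fin n) → (Fin k → X × A × R) → X → A → ℝ)
    (muhat : (k : Fin n) → (Fin k → X × A × R) → X → A → ℝ)
    (M δΔ δρ ρmax e δ : ℝ) (hδ : 0 < δ) (hδ' : δ < 1)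
    (hD0 : ∀ x, 0 ≤ D x) (hD1 : ∑ x, D x = 1)
    (hnu0 : ∀ x a, 0 ≤ nu x a) (hnu1 : ∀ x, ∑ a, nu x a = 1)
    (hmu0 : ∀ k h x a, 0 ≤ mu k h x a) (hmu1 : ∀ k h x, ∑ a, mu k h x a = 1)
    (hDr0 : ∀ x a r, 0 ≤ Dr x a r) (hDr1 : ∀ x a, ∑ r, Dr x a r = 1)
    (hrval0 : ∀ r, 0 ≤ rval r) (hrval1 : ∀ r, rval r ≤ 1)
    (hrhat0 : ∀ x a, 0 ≤ rhat x a) (hrhat1 : ∀ x a, rhat x a ≤ 1)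
    (hmuhat : ∀ k h x a, 0 < muhat k h x a)
    (hpos : ∀ k h x a, 0 < nu x a → 0 < mu k h x a)
    (rstar : X → A → ℝ) (hrstar : ∀ x a, rstar x a = ∑ r, Dr x a r * rval r)
    (Δ : X → A → ℝ) (hΔ : ∀ x a, Δ x a = rhat x a - rstar x a)
    (rnux : X → ℝ) (hrnux : ∀ x, rnux x = ∑ a, nu x a * rstar x a)
    (V : ℝ) (hV : V = ∑ x, ∑ a, D x * (nu x a * rstar x a))
    (P : (Fin n → X × A × R) → ℝ)
    (hP : ∀ z, P z = ∏ k, D (z k).1 *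
      (mu k (fun i => z ⟨i.1, i.isLt.trans k.isLt⟩) (z k).1 (z k).2.1 *
        Dr (z k).1 (z k).2.1 (z k).2.2))
    (Vhatk : (k : Fin n) → (Fin k → X × A × R) → X × A × R → ℝ)
    (hVhatk : ∀ k h s, Vhatk k h s =
      (∑ a', nu s.1 a' * rhat s.1 a') +
        (nu s.1 s.2.1 / muhat k h s.1 s.2.1) * (rval s.2.2 - rhat s.1 s.2.1))
    -- Assumptions (holding almost surely under the exploration measure)
    (hδΔ : ∑ x, ∑ a, D x * (nu x a * |Δ x a|) ≤ δΔ)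
    (he : ∑ x, ∑ a, D x * (nu x a * ∑ r, Dr x a r * (rhat x a - rval r)^2) ≤ e)
    (hδρ : ∀ z, P z ≠ 0 → ∀ (k : Fin n) x a,
      |1 - mu k (fun i => z ⟨i.1, i.isLt.trans k.isLt⟩) x a /
            muhat k (fun i => z ⟨i.1, i.isLt.trans k.isLt⟩) x a| ≤ δρ)
    (hρmax : ∀ z, P z ≠ 0 → ∀ (k : Fin n) x a,
      mu k (fun i => z ⟨i.1, i.isLt.trans k.isLt⟩) x a /
          muhat k (fun i => z ⟨i.1, i.isLt.trans k.isLt⟩) x a ≤ ρmax)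
    (hM : ∀ z, P z ≠ 0 → ∀ (k : Fin n) x a,
      nu x a / muhat k (fun i => z ⟨i.1, i.isLt.trans k.isLt⟩) x a ≤ M) :
    1 - δ ≤ ∑ z : Fin n → X × A × R,
      (if |((n : ℝ)⁻¹ * ∑ k, Vhatk k (fun i => z ⟨i.1, i.isLt.trans k.isLt⟩) (z k)) - V|
          ≤ δρ * δΔ + 2 * max ((1 + M) * Real.log (2 / δ) / n)
              (Real.sqrt ((((∑ x, D x * (rnux x)^2) - (∑ x, D x * rnux x)^2)
                  + 2 * (δρ * δΔ) + M * (ρmax * e)) * Real.log (2 / δ) / n))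
        then P z else 0) := by
  -- nonemptiness
  have hXne : Nonempty X := by
    by_contra h
    rw [not_nonempty_iff] at h
    rw [Finset.univ_eq_empty, Finset.sum_empty] at hD1
    norm_num at hD1
  obtain ⟨x0⟩ := hXne
  have hAne : Nonempty A := by
    by_contra h
    rw [not_nonempty_iff] at h
    have := hnu1 x0
    rw [Finset.univ_eq_empty, Finset.sum_empty] at this
    norm_num at this
  obtain ⟨a0⟩ := hAne
  have hRne : Nonempty R := by
    by_contra h
    rw [not_nonempty_iff] at h
    have := hDr1 x0 a0
    rw [Finset.univ_eq_empty, Finset.sum_empty] at this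
    norm_num at this
  obtain ⟨r0⟩ := hRne
  have hXne : Nonempty X := ⟨x0⟩
  have hAne : Nonempty A := ⟨a0⟩
  have hRne : Nonempty R := ⟨r0⟩
  set sdef : X × A × R := (x0, a0, r0) with hsdef
  -- the one-step kernel, indexed by ℕ with streams as histories
  obtain ⟨Q, hQd⟩ : ∃ Q : ℕ → (ℕ → X × A × R) → X × A × R → ℝ,
      ∀ k H s, Q k H s = if hk : k < n then
          D s.1 * (mu ⟨k, hk⟩ (fun i : Fin k => H i.1) s.1 s.2.1 * Dr s.1 s.2.1 s.2.2)
        else (if s = sdef then 1 else 0) := ⟨_, fun _ _ _ => rfl⟩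
  have hQ0 : ∀ k H s, 0 ≤ Q k H s := by
    intro k H s
    rw [hQd]
    split
    · exact mul_nonneg (hD0 _) (mul_nonneg (hmu0 _ _ _ _) (hDr0 _ _ _))
    · split <;> norm_num
  have hQ1 : ∀ k H, ∑ s, Q k H s = 1 := by
    intro k H
    rw [Finset.sum_congr rfl fun s _ => hQd k H s]
    split
    · rename_i hk
      rw [sum3 (fun s => D s.1 * (mu ⟨k, hk⟩ (fun i : Fin k => H i.1) s.1 s.2.1
        * Dr s.1 s.2.1 s.2.2))]
      rw [Finset.sum_congr rfl fun (x : X) _ => Finset.sum_congr rfl fun (a : A) _ =>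
        show ∑ r : R, D x * (mu ⟨k, hk⟩ (fun i : Fin k => H i.1) x a * Dr x a r)
          = D x * mu ⟨k, hk⟩ (fun i : Fin k => H i.1) x a from by
          rw [← Finset.mul_sum, ← Finset.mul_sum, hDr1, mul_one]]
      rw [Finset.sum_congr rfl fun (x : X) _ =>
        show ∑ a : A, D x * mu ⟨k, hk⟩ (fun i : Fin k => H i.1) x a = D x from by
          rw [← Finset.mul_sum, hmu1, mul_one]]
      exact hD1
    · simp
  -- P is the product of kernels along the path
  have hPQ : ∀ z : Fin n → X × A × R,
      P z = ∏ k : Fin n, Q k.1 (Hst sdef z k.1) (z k) := by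
    intro z
    rw [hP]
    refine Finset.prod_congr rfl fun k _ => ?_
    rw [hQd, dif_pos k.isLt]
    have hh : (fun i : Fin k.1 => Hst sdef z k.1 i.1)
        = (fun i : Fin k.1 => z ⟨i.1, i.isLt.trans k.isLt⟩) := by
      funext i
      show (if h : i.1 < n ∧ i.1 < k.1 then z ⟨i.1, h.1⟩ else sdef) = _
      rw [dif_pos ⟨i.isLt.trans k.isLt, i.isLt⟩]
    rw [hh]
  have hP0 : ∀ z, 0 ≤ P z := fun z => by
    rw [hPQ]; exact Finset.prod_nonneg fun k _ => hQ0 _ _ _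
  have hPsum : ∑ z : Fin n → X × A × R, P z = 1 := by
    rw [Finset.sum_congr rfl fun z _ => hPQ z]
    exact sum_prod_one sdef n Q hQ1
  -- a fully supported path and nonnegativity of the constants
  obtain ⟨zs, hzs⟩ := exists_pathPos sdef n Q hQ1
  have hPzs : P zs ≠ 0 := by
    rw [hPQ]
    exact Finset.prod_ne_zero_iff.2 fun k _ => hzs k
  have k0 : Fin n := ⟨0, hn⟩
  have hδρ0 : 0 ≤ δρ := le_trans (abs_nonneg _) (hδρ zs hPzs k0 x0 a0)
  have hρmax0 : 0 ≤ ρmax :=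
    le_trans (div_nonneg (hmu0 _ _ x0 a0) (hmuhat _ _ x0 a0).le) (hρmax zs hPzs k0 x0 a0)
  have hM0 : 0 ≤ M :=
    le_trans (div_nonneg (hnu0 x0 a0) (hmuhat _ _ x0 a0).le) (hM zs hPzs k0 x0 a0)
  have hδΔ0 : 0 ≤ δΔ := le_trans (Finset.sum_nonneg fun x _ => Finset.sum_nonneg fun a _ =>
    mul_nonneg (hD0 x) (mul_nonneg (hnu0 x a) (abs_nonneg _))) hδΔ
  have he0 : 0 ≤ e := le_trans (Finset.sum_nonneg fun x _ => Finset.sum_nonneg fun a _ =>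
    mul_nonneg (hD0 x) (mul_nonneg (hnu0 x a)
      (Finset.sum_nonneg fun r _ => mul_nonneg (hDr0 x a r) (sq_nonneg _)))) he
  have hbδ0 : 0 ≤ δρ * δΔ := mul_nonneg hδρ0 hδΔ0
  -- variance constant
  set σ2 : ℝ := ((∑ x, D x * (rnux x)^2) - (∑ x, D x * rnux x)^2)
      + 2 * (δρ * δΔ) + M * (ρmax * e) with hσ2d
  have hDV : ∑ x, D x * rnux x = V := by
    rw [hV]
    refine Finset.sum_congr rfl fun x _ => ?_
    rw [hrnux, Finset.mul_sum]
  have hVar0 : 0 ≤ (∑ x, D x * (rnux x)^2) - (∑ x, D x * rnux x)^2 := by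
    have hid : ∑ x, D x * (rnux x - V)^2
        = (∑ x, D x * (rnux x)^2) - (∑ x, D x * rnux x)^2 := by
      have expand : ∀ x, D x * (rnux x - V)^2
          = D x * (rnux x)^2 - (2*V)*(D x * rnux x) + (V^2)*(D x) := by intro x; ring
      rw [Finset.sum_congr rfl fun x _ => expand x, Finset.sum_add_distrib,
        Finset.sum_sub_distrib, ← Finset.mul_sum, ← Finset.mul_sum, hDV, hD1]
      ring
    have h0 : 0 ≤ ∑ x, D x * (rnux x - V)^2 :=
      Finset.sum_nonneg fun x _ => mul_nonneg (hD0 x) (sq_nonneg _)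
    linarith
  have hσ20 : 0 ≤ σ2 := by
    have : 0 ≤ M * (ρmax * e) := mul_nonneg hM0 (mul_nonneg hρmax0 he0)
    rw [hσ2d]; linarith
  have hn0 : (0:ℝ) < n := by exact_mod_cast hn
  set L : ℝ := Real.log (2 / δ) with hLd
  have hL : 0 < L := Real.log_pos (by rw [lt_div_iff₀ hδ]; linarith)
  set t : ℝ := 2 * max ((1 + M) * L / n) (Real.sqrt (σ2 * L / n)) with htd
  have hR : (0:ℝ) < 1 + M := by linarith
  -- the centered payoff functions
  obtain ⟨F, hFd⟩ : ∃ F : ℕ → (ℕ → X × A × R) → X × A × R → ℝ,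
      ∀ k H s, F k H s = if hk : k < n then
          Vhatk ⟨k, hk⟩ (fun i : Fin k => H i.1) s - V else 0 := ⟨_, fun _ _ _ => rfl⟩
  have hFr : ∀ (z : Fin n → X × A × R) (k : Fin n),
      F k.1 (Hst sdef z k.1) (z k)
        = Vhatk k (fun i => z ⟨i.1, i.isLt.trans k.isLt⟩) (z k) - V := by
    intro z k
    rw [hFd, dif_pos k.isLt]
    have hh : (fun i : Fin k.1 => Hst sdef z k.1 i.1)
        = (fun i : Fin k.1 => z ⟨i.1, i.isLt.trans k.isLt⟩) := by
      funext i
      show (if h : i.1 < n ∧ i.1 < k.1 then z ⟨i.1, h.1⟩ else sdef) = _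
      rw [dif_pos ⟨i.isLt.trans k.isLt, i.isLt⟩]
    rw [hh]
  -- per-step conditional bounds at reachable histories
  have hstep : ∀ (k : ℕ) (H : ℕ → X × A × R),
      (∃ z : Fin n → X × A × R, PathPos sdef Q z ∧ H = Hst sdef z k) →
      |∑ s, Q k H s * F k H s| ≤ δρ * δΔ ∧
      (∑ s, Q k H s * (F k H s)^2 ≤ σ2) ∧ (∀ s, |F k H s| ≤ 1 + M) := by
    intro k H hwit
    by_cases hk : k < n
    · obtain ⟨z, hzp, hH⟩ := hwit
      have hPz : P z ≠ 0 := by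
        rw [hPQ]; exact Finset.prod_ne_zero_iff.2 fun j _ => hzp j
      have hmatch : (fun i : Fin k => H i.1)
          = (fun i : Fin ((⟨k, hk⟩ : Fin n) : ℕ) =>
              z ⟨i.1, i.isLt.trans (⟨k, hk⟩ : Fin n).isLt⟩) := by
        funext i
        rw [hH]
        show (if h : i.1 < n ∧ i.1 < k then z ⟨i.1, h.1⟩ else sdef) = _
        rw [dif_pos ⟨i.isLt.trans hk, i.isLt⟩]
      have hbδρ : ∀ x a, |1 - mu ⟨k, hk⟩ (fun i : Fin k => H i.1) x a /
          muhat ⟨k, hk⟩ (fun i : Fin k => H i.1) x a| ≤ δρ := fun x a => by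
        rw [hmatch]; exact hδρ z hPz ⟨k, hk⟩ x a
      have hbρ : ∀ x a, mu ⟨k, hk⟩ (fun i : Fin k => H i.1) x a /
          muhat ⟨k, hk⟩ (fun i : Fin k => H i.1) x a ≤ ρmax := fun x a => by
        rw [hmatch]; exact hρmax z hPz ⟨k, hk⟩ x a
      have hbM : ∀ x a, nu x a /
          muhat ⟨k, hk⟩ (fun i : Fin k => H i.1) x a ≤ M := fun x a => by
        rw [hmatch]; exact hM z hPz ⟨k, hk⟩ x a
      obtain ⟨c1, c2, c3⟩ := core D nu Dr rval rhat
        (mu ⟨k, hk⟩ (fun i : Fin k => H i.1)) (muhat ⟨k, hk⟩ (fun i : Fin k => H i.1))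
        M δΔ δρ ρmax e V rstar Δ rnux hD0 hD1 hnu0 hnu1
        (fun x a => hmu0 _ _ x a) (fun x => hmu1 _ _ x) hDr0 hDr1 hrval0 hrval1
        hrhat0 hrhat1 (fun x a => hmuhat _ _ x a) hrstar hΔ hrnux hV hδΔ he
        hbδρ hbρ hbM hδρ0 hρmax0 hM0
        (Vhatk ⟨k, hk⟩ (fun i : Fin k => H i.1))
        (fun x a r => hVhatk ⟨k, hk⟩ (fun i : Fin k => H i.1) (x, a, r))
      have hq : ∀ s : X × A × R, Q k H s
          = D s.1 * (mu ⟨k, hk⟩ (fun i : Fin k => H i.1) s.1 s.2.1 * Dr s.1 s.2.1 s.2.2) :=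
        fun s => by rw [hQd, dif_pos hk]
      have hfF : ∀ s : X × A × R, F k H s
          = Vhatk ⟨k, hk⟩ (fun i : Fin k => H i.1) s - V := fun s => by rw [hFd, dif_pos hk]
      refine ⟨?_, ?_, ?_⟩
      · rw [Finset.sum_congr rfl fun s _ => by rw [hq s, hfF s]]
        exact c1
      · rw [Finset.sum_congr rfl fun s _ => by rw [hq s, hfF s]]
        exact c2
      · intro s; rw [hfF s]; exact c3 s
    · have hfF : ∀ s : X × A × R, F k H s = 0 := fun s => by rw [hFd, dif_neg hk]
      refine ⟨?_, ?_, ?_⟩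
      · rw [Finset.sum_eq_zero fun s _ => by rw [hfF s]; ring]
        simpa using hbδ0
      · rw [Finset.sum_eq_zero fun s _ => by rw [hfF s]; ring]
        exact hσ20
      · intro s; rw [hfF s]; rw [abs_zero]; linarith
  -- choice of the exponential tilt
  have hlam : ∃ lam : ℝ, 0 < lam ∧ lam * (1+M) ≤ 1 ∧
      -(lam * ((n:ℝ)*(δρ*δΔ + t))) + (n:ℝ)*(lam*(δρ*δΔ) + lam^2*σ2) ≤ -L := by
    rcases le_total (Real.sqrt (σ2 * L / n)) ((1+M)*L/n) with hAB | hBA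
    · refine ⟨1/(1+M), by positivity, by field_simp; exact le_refl _, ?_⟩
      have ht : t = 2*((1+M)*L/n) := by rw [htd, max_eq_left hAB]
      have hs : σ2 * L / n ≤ ((1+M)*L/n)^2 := by
        have h1 := Real.sq_sqrt (show 0 ≤ σ2*L/n by positivity)
        nlinarith [Real.sqrt_nonneg (σ2*L/n), hAB]
      have hσle : σ2 ≤ (1+M)^2 * L / n := by
        have h2 : σ2 * L / n * (n / L) ≤ ((1+M)*L/n)^2 * (n/L) :=
          mul_le_mul_of_nonneg_right hs (by positivity)
        calc σ2 = σ2 * L / n * (n / L) := by field_simp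
          _ ≤ ((1+M)*L/n)^2 * (n/L) := h2
          _ = (1+M)^2 * L / n := by field_simp
      rw [ht]
      have expand : -(1/(1+M) * ((n:ℝ)*(δρ*δΔ + 2*((1+M)*L/n))))
          + (n:ℝ)*((1/(1+M))*(δρ*δΔ) + (1/(1+M))^2*σ2)
          = -(2*L) + (n:ℝ)*σ2/(1+M)^2 := by
        field_simp
        ring
      rw [expand]
      have hfin : (n:ℝ)*σ2/(1+M)^2 ≤ L := by
        calc (n:ℝ)*σ2/(1+M)^2 ≤ (n:ℝ)*((1+M)^2*L/n)/(1+M)^2 := by gcongr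
          _ = L := by field_simp
      linarith
    · have hsp : 0 < Real.sqrt (σ2*L/n) := lt_of_lt_of_le (by positivity) hBA
      have hσp : 0 < σ2 := by
        by_contra hc
        push_neg at hc
        have h1 : σ2 * L / n ≤ 0 := by
          apply div_nonpos_of_nonpos_of_nonneg _ hn0.le
          exact mul_nonpos_of_nonpos_of_nonneg hc hL.le
        rw [Real.sqrt_eq_zero'.2 h1] at hsp
        exact lt_irrefl 0 hsp
      set lam := Real.sqrt (L/((n:ℝ)*σ2)) with hlamd
      have hlampos : 0 < lam := Real.sqrt_pos.2 (by positivity)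
      have hlam2 : lam^2 = L/((n:ℝ)*σ2) := Real.sq_sqrt (by positivity)
      have ht : t = 2*Real.sqrt (σ2*L/n) := by rw [htd, max_eq_right hBA]
      have hσne : σ2 ≠ 0 := ne_of_gt hσp
      have hnne : (n:ℝ) ≠ 0 := ne_of_gt hn0
      have hRσ : (1+M)^2*L ≤ (n:ℝ)*σ2 := by
        have h1 := Real.sq_sqrt (show 0 ≤ σ2*L/n by positivity)
        have hx0 : (0:ℝ) ≤ (1+M)*L/n := by positivity
        have h2 : ((1+M)*L/n)^2 ≤ σ2*L/n := by
          nlinarith [Real.sqrt_nonneg (σ2*L/n), hBA, hx0]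
        have h3 := mul_le_mul_of_nonneg_right h2
          (le_of_lt (show (0:ℝ) < (n:ℝ)^2/L by positivity))
        calc (1+M)^2*L = ((1+M)*L/n)^2 * ((n:ℝ)^2/L) := by field_simp
          _ ≤ (σ2*L/n)*((n:ℝ)^2/L) := h3
          _ = (n:ℝ)*σ2 := by field_simp
      have hlamR : lam * (1+M) ≤ 1 := by
        have hsq : (lam*(1+M))^2 ≤ 1 := by
          rw [mul_pow, hlam2, div_mul_eq_mul_div, div_le_one (by positivity)]
          linarith [hRσ]
        nlinarith [hsq, hlampos.le, hR.le]
      refine ⟨lam, hlampos, hlamR, ?_⟩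
      rw [ht]
      have hprod : lam * Real.sqrt (σ2*L/n) = L/n := by
        rw [hlamd, ← Real.sqrt_mul (by positivity)]
        rw [show L/((n:ℝ)*σ2) * (σ2*L/n) = (L/n)^2 from by field_simp]
        exact Real.sqrt_sq (by positivity)
      have hterm : (n:ℝ)*(lam^2*σ2) = L := by rw [hlam2]; field_simp
      have hre : -(lam * ((n:ℝ)*(δρ*δΔ + 2*Real.sqrt (σ2*L/n))))
            + (n:ℝ)*(lam*(δρ*δΔ) + lam^2*σ2)
          = -2*((n:ℝ)*(lam * Real.sqrt (σ2*L/n))) + (n:ℝ)*(lam^2*σ2) := by ring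
      rw [hre, hprod, hterm]
      have h3 : (n:ℝ)*(L/n) = L := by field_simp
      rw [h3]
      linarith
  -- the Chernoff tail bound
  have tail : ∀ G : ℕ → (ℕ → X × A × R) → X × A × R → ℝ,
      (∀ k H, (∃ z : Fin n → X × A × R, PathPos sdef Q z ∧ H = Hst sdef z k) →
        (∑ s, Q k H s * G k H s ≤ δρ * δΔ) ∧ (∑ s, Q k H s * (G k H s)^2 ≤ σ2) ∧
        (∀ s, G k H s ≤ 1 + M)) →
      ∑ z ∈ Finset.univ.filter (fun z : Fin n → X × A × R =>
          (n:ℝ)*(δρ*δΔ + t) ≤ ∑ k : Fin n, G k.1 (Hst sdef z k.1) (z k)), P z ≤ δ/2 := by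
    intro G hG
    obtain ⟨lam, hlam0, hlamR, hexpo⟩ := hlam
    calc ∑ z ∈ Finset.univ.filter (fun z : Fin n → X × A × R =>
            (n:ℝ)*(δρ*δΔ + t) ≤ ∑ k : Fin n, G k.1 (Hst sdef z k.1) (z k)), P z
        ≤ ∑ z ∈ Finset.univ.filter (fun z : Fin n → X × A × R =>
            (n:ℝ)*(δρ*δΔ + t) ≤ ∑ k : Fin n, G k.1 (Hst sdef z k.1) (z k)),
            P z * Real.exp (lam * ((∑ k : Fin n, G k.1 (Hst sdef z k.1) (z k))
              - (n:ℝ)*(δρ*δΔ + t))) := by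
          refine Finset.sum_le_sum fun z hz => ?_
          have hmem := (Finset.mem_filter.1 hz).2
          nth_rewrite 1 [← mul_one (P z)]
          exact mul_le_mul_of_nonneg_left
            (Real.one_le_exp (mul_nonneg hlam0.le (sub_nonneg.2 hmem))) (hP0 z)
      _ ≤ ∑ z : Fin n → X × A × R,
            P z * Real.exp (lam * ((∑ k : Fin n, G k.1 (Hst sdef z k.1) (z k))
              - (n:ℝ)*(δρ*δΔ + t))) :=
          Finset.sum_le_sum_of_subset_of_nonneg (Finset.filter_subset _ _)
            (fun z _ _ => mul_nonneg (hP0 z) (Real.exp_pos _).le)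
      _ = Real.exp (-(lam * ((n:ℝ)*(δρ*δΔ + t)))) * ∑ z : Fin n → X × A × R,
            ∏ k : Fin n, (Q k.1 (Hst sdef z k.1) (z k)
              * Real.exp (lam * G k.1 (Hst sdef z k.1) (z k))) := by
          rw [Finset.mul_sum]
          refine Finset.sum_congr rfl fun z _ => ?_
          rw [Finset.prod_mul_distrib, ← hPQ z]
          rw [show (∏ k : Fin n, Real.exp (lam * G k.1 (Hst sdef z k.1) (z k)))
            = Real.exp (∑ k : Fin n, lam * G k.1 (Hst sdef z k.1) (z k)) from
            (Real.exp_sum _ _).symm]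
          rw [show (∑ k : Fin n, lam * G k.1 (Hst sdef z k.1) (z k))
            = lam * ∑ k : Fin n, G k.1 (Hst sdef z k.1) (z k) from
            (Finset.mul_sum _ _ _).symm]
          rw [show lam * ((∑ k : Fin n, G k.1 (Hst sdef z k.1) (z k)) - (n:ℝ)*(δρ*δΔ + t))
            = (-(lam * ((n:ℝ)*(δρ*δΔ + t))))
              + lam * ∑ k : Fin n, G k.1 (Hst sdef z k.1) (z k) from by ring]
          rw [Real.exp_add]
          ring
      _ ≤ Real.exp (-(lam * ((n:ℝ)*(δρ*δΔ + t))))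
            * (Real.exp (lam * (δρ*δΔ) + lam^2 * σ2))^n := by
          refine mul_le_mul_of_nonneg_left ?_ (Real.exp_pos _).le
          refine peel_le sdef n (Real.exp (lam * (δρ*δΔ) + lam^2 * σ2)) Q
            (fun k h s => Real.exp (lam * G k h s)) (Real.exp_pos _).le hQ0 hQ1
            (fun k h s => (Real.exp_pos _).le) ?_
          intro k h hwit
          exact step_exp (Q k h) (G k h) (δρ*δΔ) σ2 lam (1+M) (hQ0 k h) (hQ1 k h)
            (hG k h hwit).1 (hG k h hwit).2.1 (hG k h hwit).2.2 hlam0 hlamR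
      _ = Real.exp (-(lam * ((n:ℝ)*(δρ*δΔ + t)))
            + (n:ℝ)*(lam * (δρ*δΔ) + lam^2 * σ2)) := by
          rw [← Real.exp_nat_mul, ← Real.exp_add]
      _ ≤ Real.exp (-L) := Real.exp_le_exp.2 hexpo
      _ = δ/2 := by
          rw [hLd, ← Real.log_inv, Real.exp_log (by positivity)]
          rw [inv_div]
  -- rewrite the estimator deviation in terms of F
  have hdec : ∀ z : Fin n → X × A × R,
      |((n : ℝ)⁻¹ * ∑ k, Vhatk k (fun i => z ⟨i.1, i.isLt.trans k.isLt⟩) (z k)) - V|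
        = (n:ℝ)⁻¹ * |∑ k : Fin n, F k.1 (Hst sdef z k.1) (z k)| := by
    intro z
    have h1 : ∑ k : Fin n, F k.1 (Hst sdef z k.1) (z k)
        = (∑ k, Vhatk k (fun i => z ⟨i.1, i.isLt.trans k.isLt⟩) (z k)) - (n:ℝ)*V := by
      rw [Finset.sum_congr rfl fun k _ => hFr z k, Finset.sum_sub_distrib]
      congr 1
      rw [Finset.sum_const, Finset.card_univ, Fintype.card_fin, nsmul_eq_mul]
    rw [h1]
    have h2 : ((n : ℝ)⁻¹ * ∑ k, Vhatk k (fun i => z ⟨i.1, i.isLt.trans k.isLt⟩) (z k)) - V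
        = (n:ℝ)⁻¹ * ((∑ k, Vhatk k (fun i => z ⟨i.1, i.isLt.trans k.isLt⟩) (z k))
            - (n:ℝ)*V) := by
      field_simp
    rw [h2, abs_mul, abs_of_nonneg (inv_nonneg.2 hn0.le)]
  have hsplit : ∀ z : Fin n → X × A × R,
      ¬(|((n : ℝ)⁻¹ * ∑ k, Vhatk k (fun i => z ⟨i.1, i.isLt.trans k.isLt⟩) (z k)) - V|
          ≤ δρ * δΔ + t) →
      ((n:ℝ)*(δρ*δΔ + t) ≤ ∑ k : Fin n, F k.1 (Hst sdef z k.1) (z k)) ∨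
      ((n:ℝ)*(δρ*δΔ + t) ≤ ∑ k : Fin n, -(F k.1 (Hst sdef z k.1) (z k))) := by
    intro z hc
    rw [hdec z] at hc
    push_neg at hc
    have h3 : (n:ℝ)*(δρ*δΔ + t) < |∑ k : Fin n, F k.1 (Hst sdef z k.1) (z k)| := by
      have h4 := mul_lt_mul_of_pos_left hc hn0
      have h5 : (n:ℝ) * ((n:ℝ)⁻¹ * |∑ k : Fin n, F k.1 (Hst sdef z k.1) (z k)|)
          = |∑ k : Fin n, F k.1 (Hst sdef z k.1) (z k)| := by
        field_simp
      linarith [h4, h5.symm.le, h5.le]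
    rcases le_or_gt 0 (∑ k : Fin n, F k.1 (Hst sdef z k.1) (z k)) with hpos | hneg
    · left
      rw [abs_of_nonneg hpos] at h3
      linarith
    · right
      rw [abs_of_neg hneg] at h3
      rw [Finset.sum_neg_distrib]
      linarith
  -- the two tails
  have hup := tail F (fun k H hw =>
    ⟨(abs_le.1 (hstep k H hw).1).2, (hstep k H hw).2.1,
      fun s => (abs_le.1 ((hstep k H hw).2.2 s)).2⟩)
  have hlo := tail (fun k h s => -(F k h s)) (fun k H hw => by
    refine ⟨?_, ?_, ?_⟩
    · rw [Finset.sum_congr rfl fun s _ =>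
        show Q k H s * -(F k H s) = -(Q k H s * F k H s) from by ring,
        Finset.sum_neg_distrib]
      linarith [(abs_le.1 (hstep k H hw).1).1]
    · rw [Finset.sum_congr rfl fun s _ =>
        show Q k H s * (-(F k H s))^2 = Q k H s * (F k H s)^2 from by ring]
      exact (hstep k H hw).2.1
    · intro s
      show -(F k H s) ≤ 1 + M
      linarith [(abs_le.1 ((hstep k H hw).2.2 s)).1])
  rw [Finset.sum_filter] at hup hlo
  -- conclusion
  have hpart : ∑ z : Fin n → X × A × R,
      (if |((n : ℝ)⁻¹ * ∑ k, Vhatk k (fun i => z ⟨i.1, i.isLt.trans k.isLt⟩) (z k)) - V|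
          ≤ δρ * δΔ + t then P z else 0)
      = 1 - ∑ z : Fin n → X × A × R,
      (if ¬(|((n : ℝ)⁻¹ * ∑ k, Vhatk k (fun i => z ⟨i.1, i.isLt.trans k.isLt⟩) (z k)) - V|
          ≤ δρ * δΔ + t) then P z else 0) := by
    have hsum : ∑ z : Fin n → X × A × R,
        ((if |((n : ℝ)⁻¹ * ∑ k, Vhatk k (fun i => z ⟨i.1, i.isLt.trans k.isLt⟩) (z k)) - V|
            ≤ δρ * δΔ + t then P z else 0)
          + (if ¬(|((n : ℝ)⁻¹ * ∑ k, Vhatk k (fun i => z ⟨i.1, i.isLt.trans k.isLt⟩) (z k))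
              - V| ≤ δρ * δΔ + t) then P z else 0)) = 1 := by
      rw [Finset.sum_congr rfl fun z _ => by
        by_cases hc : |((n : ℝ)⁻¹ * ∑ k, Vhatk k
            (fun i => z ⟨i.1, i.isLt.trans k.isLt⟩) (z k)) - V| ≤ δρ * δΔ + t
        · rw [if_pos hc, if_neg (not_not_intro hc), add_zero]
        · rw [if_neg hc, if_pos hc, zero_add]]
      exact hPsum
    rw [Finset.sum_add_distrib] at hsum
    linarith
  rw [hpart]
  have hbad : ∑ z : Fin n → X × A × R,
      (if ¬(|((n : ℝ)⁻¹ * ∑ k, Vhatk k (fun i => z ⟨i.1, i.isLt.trans k.isLt⟩) (z k)) - V|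
          ≤ δρ * δΔ + t) then P z else 0) ≤ δ := by
    calc ∑ z : Fin n → X × A × R,
        (if ¬(|((n : ℝ)⁻¹ * ∑ k, Vhatk k (fun i => z ⟨i.1, i.isLt.trans k.isLt⟩) (z k)) - V|
            ≤ δρ * δΔ + t) then P z else 0)
        ≤ ∑ z : Fin n → X × A × R,
          ((if (n:ℝ)*(δρ*δΔ + t) ≤ ∑ k : Fin n, F k.1 (Hst sdef z k.1) (z k)
              then P z else 0)
            + (if (n:ℝ)*(δρ*δΔ + t) ≤ ∑ k : Fin n, -(F k.1 (Hst sdef z k.1) (z k))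
              then P z else 0)) := by
          refine Finset.sum_le_sum fun z _ => ?_
          by_cases hc : |((n : ℝ)⁻¹ * ∑ k, Vhatk k
              (fun i => z ⟨i.1, i.isLt.trans k.isLt⟩) (z k)) - V| ≤ δρ * δΔ + t
          · rw [if_neg (not_not_intro hc)]
            have h1 : (0:ℝ) ≤ (if (n:ℝ)*(δρ*δΔ + t)
                ≤ ∑ k : Fin n, F k.1 (Hst sdef z k.1) (z k) then P z else 0) := by
              split
              · exact hP0 z
              · exact le_refl 0
            have h2 : (0:ℝ) ≤ (if (n:ℝ)*(δρ*δΔ + t)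
                ≤ ∑ k : Fin n, -(F k.1 (Hst sdef z k.1) (z k)) then P z else 0) := by
              split
              · exact hP0 z
              · exact le_refl 0
            linarith
          · rw [if_pos hc]
            rcases hsplit z hc with h | h
            · rw [if_pos h]
              have : (0:ℝ) ≤ (if (n:ℝ)*(δρ*δΔ + t)
                  ≤ ∑ k : Fin n, -(F k.1 (Hst sdef z k.1) (z k)) then P z else 0) := by
                split
                · exact hP0 z
                · exact le_refl 0
              linarith
            · rw [if_pos h]
              have : (0:ℝ) ≤ (if (n:ℝ)*(δρ*δΔ + t)
                  ≤ ∑ k : Fin n, F k.1 (Hst sdef z k.1) (z k) then P z else 0) := by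
                split
                · exact hP0 z
                · exact le_refl 0
              linarith
      _ = (∑ z : Fin n → X × A × R,
            if (n:ℝ)*(δρ*δΔ + t) ≤ ∑ k : Fin n, F k.1 (Hst sdef z k.1) (z k)
              then P z else 0)
          + ∑ z : Fin n → X × A × R,
            if (n:ℝ)*(δρ*δΔ + t) ≤ ∑ k : Fin n, -(F k.1 (Hst sdef z k.1) (z k))
              then P z else 0 := Finset.sum_add_distrib
      _ ≤ δ/2 + δ/2 := add_le_add hup hlo
      _ = δ := by ring
  linarith
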